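/- Under the hypotheses of the inexact Newton theorem — f : U → Y differentiable, x₀ ∈ U, B̄(x₀,R) ⊆ U, Df(x₀) invertible with bounded inverse, ‖Df(x₀)⁻¹f(x₀)‖ ≤ η, ‖Df(x₀)⁻¹(Df(x) − Df(y))‖ ≤ K‖x−y‖ on B̄(x₀,R), d > 0 with Kd ≤ 1, and g_d(t) = (η+d) − (1+Kd)t + (3K/2)t² having smallest real root t* ≤ R — the function f has a unique zero x* in B̄(x₀, t*). -/

import Mathlib

set_option maxHeartbeats 1000000 in
theorem stmt_9
    {X Y : Type*} [NormedAddCommGroup X] [NormedSpace ℝ X] [CompleteSpace X]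
    [NormedAddCommGroup Y] [NormedSpace ℝ Y] [CompleteSpace Y]
    (U : Set X) (hU : IsOpen U) (f : X → Y) (f' : X → (X →L[ℝ] Y))
    (hf : ∀ x ∈ U, HasFDerivAt f (f' x) x)
    (x₀ : X) (hx₀ : x₀ ∈ U) (R : ℝ) (hR : 0 < R)
    (hball : Metric.closedBall x₀ R ⊆ U)
    (e₀ : X ≃L[ℝ] Y) (he₀ : (e₀ : X →L[ℝ] Y) = f' x₀)
    (η K d : ℝ) (hη : 0 ≤ η) (hK : 0 < K) (hd : 0 < d) (hKd : K * d ≤ 1)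
    (hη₀ : ‖e₀.symm (f x₀)‖ ≤ η)
    (hLip : ∀ x ∈ Metric.closedBall x₀ R, ∀ y ∈ Metric.closedBall x₀ R,
      ‖(e₀.symm : Y →L[ℝ] X).comp (f' x - f' y)‖ ≤ K * ‖x - y‖)
    (t : ℝ)
    (hroot : (η + d) - (1 + K * d) * t + 3 * K / 2 * t ^ 2 = 0)
    (hsmallest : ∀ s : ℝ, (η + d) - (1 + K * d) * s + 3 * K / 2 * s ^ 2 = 0 → t ≤ s)
    (htR : t ≤ R) :
    ∃! x : X, x ∈ Metric.closedBall x₀ t ∧ f x = 0 := by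
  have hK0 : K ≠ 0 := hK.ne'
  -- t > 0
  have ht0 : 0 < t := by
    by_contra h
    push_neg at h
    nlinarith [mul_nonneg (show (0:ℝ) ≤ 1 + K * d by nlinarith) (neg_nonneg.2 h),
      mul_nonneg hK.le (sq_nonneg t)]
  -- the other root of the quadratic
  have hother : (η + d) - (1 + K * d) * (2 * (1 + K * d) / (3 * K) - t)
      + 3 * K / 2 * (2 * (1 + K * d) / (3 * K) - t) ^ 2 = 0 := by
    field_simp
    ring_nf
    linear_combination (6 * K) * hroot
  have hvert : 3 * K * t ≤ 1 + K * d := by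
    have h1 := hsmallest _ hother
    have h2 : 2 * t ≤ 2 * (1 + K * d) / (3 * K) := by linarith
    rw [le_div_iff₀ (by linarith : (0:ℝ) < 3 * K)] at h2
    linarith
  have hKt : K * t < 1 := by linarith
  have hquad : K * t * t + η ≤ t := by
    nlinarith [mul_nonneg hd.le (sub_nonneg.2 hKt.le), mul_nonneg hK.le (sq_nonneg t)]
  clear hother hsmallest hroot
  -- the simplified Newton map
  set L : X → X := fun x => x - e₀.symm (f x) with hLdef
  set B : Set X := Metric.closedBall x₀ t with hBdef
  have hBR : B ⊆ Metric.closedBall x₀ R :=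
    Metric.closedBall_subset_closedBall htR
  have hBU : B ⊆ U := fun x hx => hball (hBR hx)
  have hx₀B : x₀ ∈ B := Metric.mem_closedBall_self ht0.le
  -- derivative of L on B with norm bound K*t
  have hLd : ∀ x ∈ B, HasFDerivWithinAt L
      ((e₀.symm : Y →L[ℝ] X).comp (f' x₀ - f' x)) B x := by
    intro x hx
    have h1 : HasFDerivAt (fun x => e₀.symm (f x))
        ((e₀.symm : Y →L[ℝ] X).comp (f' x)) x :=
      (e₀.symm : Y →L[ℝ] X).hasFDerivAt.comp x (hf x (hBU hx))
    have h2 : HasFDerivAt L (ContinuousLinearMap.id ℝ X -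
        (e₀.symm : Y →L[ℝ] X).comp (f' x)) x :=
      (hasFDerivAt_id x).sub h1
    have heq : ContinuousLinearMap.id ℝ X - (e₀.symm : Y →L[ℝ] X).comp (f' x)
        = (e₀.symm : Y →L[ℝ] X).comp (f' x₀ - f' x) := by
      ext v
      simp [← he₀]
    rw [heq] at h2
    exact h2.hasFDerivWithinAt
  have hLbound : ∀ x ∈ B, ‖(e₀.symm : Y →L[ℝ] X).comp (f' x₀ - f' x)‖ ≤ K * t := by
    intro x hx
    have h1 : ‖(e₀.symm : Y →L[ℝ] X).comp (f' x₀ - f' x)‖ ≤ K * ‖x₀ - x‖ :=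
      hLip x₀ (Metric.mem_closedBall_self hR.le) x (hBR hx)
    have h2 : ‖x₀ - x‖ ≤ t := by
      rw [norm_sub_rev]
      exact mem_closedBall_iff_norm.mp hx
    nlinarith
  have hconv : Convex ℝ B := convex_closedBall x₀ t
  have hLipL : ∀ x ∈ B, ∀ y ∈ B, ‖L y - L x‖ ≤ K * t * ‖y - x‖ := fun x hx y hy =>
    hconv.norm_image_sub_le_of_norm_hasFDerivWithin_le hLd hLbound hx hy
  -- L maps B into itself
  have hmaps : ∀ x ∈ B, L x ∈ B := by
    intro x hx
    have h1 : ‖L x - L x₀‖ ≤ K * t * ‖x - x₀‖ := hLipL x₀ hx₀B x hx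
    have h2 : ‖L x₀ - x₀‖ ≤ η := by
      simpa [hLdef, norm_sub_rev] using hη₀
    have hxt : ‖x - x₀‖ ≤ t := mem_closedBall_iff_norm.mp hx
    have h1' : ‖L x - L x₀‖ ≤ K * t * t :=
      h1.trans (mul_le_mul_of_nonneg_left hxt (by positivity))
    have h3 : ‖L x - x₀‖ ≤ t := by
      calc ‖L x - x₀‖ ≤ ‖L x - L x₀‖ + ‖L x₀ - x₀‖ := norm_sub_le_norm_sub_add_norm_sub _ _ _
        _ ≤ t := by linarith
    exact mem_closedBall_iff_norm.mpr h3
  -- zeros of f are exactly fixed points of L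
  have hfix : ∀ x, f x = 0 ↔ L x = x := by
    intro x
    constructor
    · intro h; simp [hLdef, h]
    · intro h
      have h1 : e₀.symm (f x) = 0 := sub_eq_self.mp h
      have h2 : e₀.symm (f x) = e₀.symm 0 := by simpa using h1
      exact e₀.symm.injective h2
  -- Banach fixed point on the closed ball
  have hBne : B.Nonempty := ⟨x₀, hx₀B⟩
  have hBclosed : IsClosed B := Metric.isClosed_closedBall
  haveI : Nonempty B := hBne.to_subtype
  haveI : CompleteSpace B := hBclosed.completeSpace_coe
  have hc0 : 0 ≤ K * t := by positivity
  set c : NNReal := ⟨K * t, hc0⟩ with hcdef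
  set g : B → B := fun x => ⟨L x, hmaps x x.2⟩ with hgdef
  have hcontr : ContractingWith c g := by
    constructor
    · exact_mod_cast hKt
    · intro x y
      rw [edist_dist, edist_dist, Subtype.dist_eq]
      have h1 : dist (L (x : X)) (L (y : X)) ≤ (c : ℝ) * dist (x : X) (y : X) := by
        rw [dist_eq_norm, dist_eq_norm]
        exact hLipL y y.2 x x.2
      calc ENNReal.ofReal (dist (g x : X) (g y : X))
          ≤ ENNReal.ofReal ((c : ℝ) * dist (x : X) (y : X)) := ENNReal.ofReal_le_ofReal h1
        _ = (c : ENNReal) * ENNReal.ofReal (dist (x : X) (y : X)) := by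
            rw [ENNReal.ofReal_mul (by positivity)]
            congr 1
            simp
  set x' : B := hcontr.fixedPoint g with hx'def
  have hfp : g x' = x' := hcontr.fixedPoint_isFixedPt
  refine ⟨(x' : X), ⟨x'.2, ?_⟩, ?_⟩
  · rw [hfix]
    exact congrArg Subtype.val hfp
  · rintro y ⟨hyB, hyf⟩
    have hy' : L y = y := (hfix y).mp hyf
    have hx'' : L (x' : X) = (x' : X) := congrArg Subtype.val hfp
    have h1 : ‖y - (x' : X)‖ ≤ K * t * ‖y - (x' : X)‖ := by
      calc ‖y - (x' : X)‖ = ‖L y - L (x' : X)‖ := by rw [hy', hx'']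
        _ ≤ K * t * ‖y - (x' : X)‖ := hLipL _ x'.2 _ hyB
    by_contra hne
    have h2 : 0 < ‖y - (x' : X)‖ := by
      simp only [norm_pos_iff, sub_ne_zero]
      exact fun h => hne h
    nlinarith
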